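/- arXiv:1412.2654 — 3 statements merged into one kernel-verified Lean document; each statement's English description precedes it below -/
import Mathlib

section
/- Let R be a commutative noetherian ring, let M and N be R-modules, and let p, q be distinct prime ideals of R. If M satisfies property t(p) and N satisfies property t(q), then Tor_i^R(M,N) = 0 for all i ≥ 0. -/
/-!
Common definitions: property t(p), injective hulls, (C-)Gorenstein injective modules,
(C-)Gorenstein injective / injective / flat dimensions, small support, torsion functor,
Tor and Ext modules, semidualizing and dualizing modules, depth, Cohen-Macaulay rings,
Serre's condition (S₁), Gorenstein local rings, minimal injective resolutions.
-/

universe u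

open CategoryTheory Limits DirectSum

noncomputable section

/-- An `R`-module `S` has property `t(p)`: multiplication by every `r ∉ p` is bijective on `S`,
and every element of `S` is annihilated by a power of `p`. -/
def PropT (R : Type u) [CommRing R] (p : Ideal R) (S : Type u) [AddCommGroup S]
    [Module R S] : Prop :=
  (∀ r : R, r ∉ p → Function.Bijective (fun s : S => r • s)) ∧
  (∀ x : S, ∃ m : ℕ, 0 < m ∧ ∀ a ∈ p ^ m, a • x = 0)

/-- `E` is an injective hull of `N` over `R`: `E` is injective and `N` embeds in `E` as an
essential submodule. -/
def IsInjectiveHull (R : Type u) [CommRing R] (N : Type u) [AddCommGroup N] [Module R N]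
    (E : Type u) [AddCommGroup E] [Module R E] : Prop :=
  Module.Injective R E ∧ ∃ ι : N →ₗ[R] E, Function.Injective ι ∧
    ∀ K : Submodule R E, K ≠ ⊥ → K ⊓ LinearMap.range ι ≠ ⊥

/-- A complete injective resolution: a doubly infinite exact sequence of injective modules
which stays exact after applying `Hom_R(-, I)` for every injective module `I`. -/
structure CompleteInjRes (R : Type u) [CommRing R] where
  E : ℤ → Type u
  [acg : ∀ i, AddCommGroup (E i)]
  [mod : ∀ i, Module R (E i)]
  d : ∀ i, E i →ₗ[R] E (i + 1)
  inj : ∀ i, Module.Injective R (E i)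
  exct : ∀ i, LinearMap.range (d i) = LinearMap.ker (d (i + 1))
  homExact : ∀ (I : Type u) [AddCommGroup I] [Module R I], Module.Injective R I →
    ∀ (i : ℤ) (g : E (i + 1) →ₗ[R] I), g ∘ₗ d i = 0 →
      ∃ h : E (i + 1 + 1) →ₗ[R] I, h ∘ₗ d (i + 1) = g

attribute [instance] CompleteInjRes.acg CompleteInjRes.mod

/-- `G` is a Gorenstein injective `R`-module: it is the image of some map in a complete
injective resolution. -/
def GorensteinInjective (R : Type u) [CommRing R] (G : Type u) [AddCommGroup G]
    [Module R G] : Prop :=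
  ∃ X : CompleteInjRes R, Nonempty (G ≃ₗ[R] LinearMap.range (X.d 0))

/-- A complete `I_C I`-resolution: an exact sequence
`⋯ → Hom(C,I₁) → Hom(C,I₀) → I⁰ → I¹ → ⋯` (terms in nonnegative degrees are injective,
terms in negative degrees are of the form `Hom_R(C, I)` with `I` injective) such that
`Hom_R(Hom_R(C,J), -)` leaves it exact for every injective `R`-module `J`. -/
structure CompleteICIRes (R : Type u) [CommRing R] (C : Type u) [AddCommGroup C]
    [Module R C] where
  X : ℤ → Type u
  [acg : ∀ i, AddCommGroup (X i)]
  [mod : ∀ i, Module R (X i)]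
  d : ∀ i, X i →ₗ[R] X (i + 1)
  exct : ∀ i, LinearMap.range (d i) = LinearMap.ker (d (i + 1))
  injPos : ∀ i : ℤ, 0 ≤ i → Module.Injective R (X i)
  homCInjNeg : ∀ i : ℤ, i < 0 → ∃ (I : Type u) (_ : AddCommGroup I) (_ : Module R I),
    Module.Injective R I ∧ Nonempty (X i ≃ₗ[R] (C →ₗ[R] I))
  homExact : ∀ (J : Type u) [AddCommGroup J] [Module R J], Module.Injective R J →
    ∀ (i : ℤ) (g : (C →ₗ[R] J) →ₗ[R] X (i + 1)), d (i + 1) ∘ₗ g = 0 →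
      ∃ h : (C →ₗ[R] J) →ₗ[R] X i, d i ∘ₗ h = g

attribute [instance] CompleteICIRes.acg CompleteICIRes.mod

/-- `G` is a `C`-Gorenstein injective `R`-module: it is the image of the map
`Hom_R(C, I₀) → I⁰` in some complete `I_C I`-resolution. -/
def CGorensteinInjective (R : Type u) [CommRing R] (C : Type u) [AddCommGroup C] [Module R C]
    (G : Type u) [AddCommGroup G] [Module R G] : Prop :=
  ∃ X : CompleteICIRes R C, Nonempty (G ≃ₗ[R] LinearMap.range (X.d (-1)))

/-- `M` has a `C`-Gorenstein injective coresolution `0 → M → G⁰ → ⋯ → Gⁿ → 0`,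
i.e. `C`-Gorenstein injective dimension at most `n`. -/
def CGidLE (R : Type u) [CommRing R] (C : Type u) [AddCommGroup C] [Module R C] :
    ℕ → ModuleCat.{u} R → Prop
  | 0, M => CGorensteinInjective R C M
  | n + 1, M => ∃ (G : ModuleCat.{u} R), CGorensteinInjective R C G ∧
      ∃ ι : M →ₗ[R] G, Function.Injective ι ∧
        CGidLE R C n (ModuleCat.of R (G ⧸ LinearMap.range ι))

/-- The `C`-Gorenstein injective dimension of `M` (equal to `⊤` if `M` admits no bounded
coresolution by `C`-Gorenstein injective modules). -/
def CGid (R : Type u) [CommRing R] (C : Type u) [AddCommGroup C] [Module R C]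
    (M : Type u) [AddCommGroup M] [Module R M] : ℕ∞ :=
  sInf {n : ℕ∞ | ∃ m : ℕ, (m : ℕ∞) = n ∧ CGidLE R C m (ModuleCat.of R M)}

/-- There exists an exact sequence `0 → N → Gₙ → ⋯ → G₁ → M → 0` in which each `Gᵢ` is
`C`-Gorenstein injective (and `N` is arbitrary). -/
def CGICoresApprox (R : Type u) [CommRing R] (C : Type u) [AddCommGroup C] [Module R C] :
    ℕ → ModuleCat.{u} R → Prop
  | 0, _ => True
  | n + 1, M => ∃ (G : ModuleCat.{u} R), CGorensteinInjective R C G ∧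
      ∃ π : G →ₗ[R] M, Function.Surjective π ∧
        CGICoresApprox R C n (ModuleCat.of R (LinearMap.ker π))

/-- The `a`-torsion submodule `Γ_a(N)` of `N`. -/
def torsionSubmodule (R : Type u) [CommRing R] (a : Ideal R) (N : Type u) [AddCommGroup N]
    [Module R N] : Submodule R N :=
  ⨆ m : ℕ, Submodule.torsionBySet R N ((a ^ m : Ideal R) : Set R)

/-- `Tor_i^R(M, N)`, as an object of `ModuleCat R`. -/
abbrev TorM (R : Type u) [CommRing R] (i : ℕ) (M N : Type u) [AddCommGroup M] [Module R M]
    [AddCommGroup N] [Module R N] : ModuleCat.{u} R :=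
  ((Tor (ModuleCat.{u} R) i).obj (ModuleCat.of R M)).obj (ModuleCat.of R N)

/-- `Ext_R^i(M, N)`, as an object of `ModuleCat R`. -/
abbrev ExtM (R : Type u) [CommRing R] (i : ℕ) (M N : Type u) [AddCommGroup M] [Module R M]
    [AddCommGroup N] [Module R N] : ModuleCat.{u} R :=
  ((Ext R (ModuleCat.{u} R) i).obj (Opposite.op (ModuleCat.of R M))).obj (ModuleCat.of R N)

/-- The small support of `M`: primes `p` such that `Tor_i^R(κ(p), M) ≠ 0` for some `i`,
where `κ(p)` is the residue field of `R_p`. -/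
def smallSupport (R : Type u) [CommRing R] (M : Type u) [AddCommGroup M] [Module R M] :
    Set (PrimeSpectrum R) :=
  {p | ∃ i : ℕ,
    Nontrivial (TorM R i (IsLocalRing.ResidueField (Localization.AtPrime p.asIdeal)) M)}

/-- `C` is a semidualizing `R`-module: finitely generated, the homothety map
`R → Hom_R(C,C)` is bijective, and `Ext_R^i(C,C) = 0` for `i ≥ 1`. -/
def IsSemidualizing (R : Type u) [CommRing R] (C : Type u) [AddCommGroup C] [Module R C] : Prop :=
  Module.Finite R C ∧
  Function.Bijective (fun r : R => (r • LinearMap.id : C →ₗ[R] C)) ∧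
  ∀ i : ℕ, 1 ≤ i → Subsingleton (ExtM R i C C)

/-- `M` has injective dimension at most `n`. -/
def InjDimLE (R : Type u) [CommRing R] : ℕ → ModuleCat.{u} R → Prop
  | 0, M => Module.Injective R M
  | n + 1, M => ∃ (I : ModuleCat.{u} R), Module.Injective R I ∧
      ∃ ι : M →ₗ[R] I, Function.Injective ι ∧
        InjDimLE R n (ModuleCat.of R (I ⧸ LinearMap.range ι))

/-- `M` has flat dimension at most `n`. -/
def FlatDimLE (R : Type u) [CommRing R] : ℕ → ModuleCat.{u} R → Prop
  | 0, M => Module.Flat R M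
  | n + 1, M => ∃ (F : ModuleCat.{u} R), Module.Flat R F ∧
      ∃ π : F →ₗ[R] M, Function.Surjective π ∧
        FlatDimLE R n (ModuleCat.of R (LinearMap.ker π))

/-- `D` is a dualizing `R`-module: semidualizing of finite injective dimension. -/
def IsDualizing (R : Type u) [CommRing R] (D : Type u) [AddCommGroup D] [Module R D] : Prop :=
  IsSemidualizing R D ∧ ∃ n : ℕ, InjDimLE R n (ModuleCat.of R D)

/-- The depth of a local ring: the supremum of lengths of regular sequences contained in
the maximal ideal. -/
def localRingDepth (A : Type u) [CommRing A] [IsLocalRing A] : ℕ∞ :=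
  sSup {n : ℕ∞ | ∃ rs : List A, (∀ r ∈ rs, r ∈ IsLocalRing.maximalIdeal A) ∧
    RingTheory.Sequence.IsRegular A rs ∧ (rs.length : ℕ∞) = n}

/-- `R` is a Cohen-Macaulay ring: for each prime `p`, `depth (R_p) = dim (R_p)`. -/
def IsCohenMacaulayRing (R : Type u) [CommRing R] : Prop :=
  ∀ (p : Ideal R) (_ : p.IsPrime),
    (localRingDepth (Localization.AtPrime p) : WithBot ℕ∞) =
      ringKrullDim (Localization.AtPrime p)

/-- Serre's condition `(S₁)`: `depth (R_p) ≥ min (ht p, 1)` for every prime `p`. -/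
def SerreS1 (R : Type u) [CommRing R] : Prop :=
  ∀ (p : Ideal R) (hp : p.IsPrime),
    min (Order.height (⟨p, hp⟩ : PrimeSpectrum R)) 1 ≤ localRingDepth (Localization.AtPrime p)

/-- A Gorenstein local ring: a noetherian local ring of finite self-injective dimension. -/
def IsGorensteinLocalRing (A : Type u) [CommRing A] : Prop :=
  IsLocalRing A ∧ IsNoetherianRing A ∧ ∃ n : ℕ, InjDimLE A n (ModuleCat.of A A)

/-- A minimal injective resolution `0 → D → J⁰ → J¹ → ⋯` of `D`: an exact sequence with all
`Jⁱ` injective, in which the kernel of each differential is an essential submodule. -/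
structure MinimalInjRes (R : Type u) [CommRing R] (D : Type u) [AddCommGroup D]
    [Module R D] where
  J : ℕ → Type u
  [acg : ∀ i, AddCommGroup (J i)]
  [mod : ∀ i, Module R (J i)]
  ε : D →ₗ[R] J 0
  d : ∀ i, J i →ₗ[R] J (i + 1)
  inj : ∀ i, Module.Injective R (J i)
  ε_inj : Function.Injective ε
  exct0 : LinearMap.range ε = LinearMap.ker (d 0)
  exct : ∀ i, LinearMap.range (d i) = LinearMap.ker (d (i + 1))
  minimal : ∀ i, ∀ K : Submodule R (J i), K ≠ ⊥ → K ⊓ LinearMap.ker (d i) ≠ ⊥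

attribute [instance] MinimalInjRes.acg MinimalInjRes.mod

end


section AuxStatement2
open TensorProduct


section ModulePrelim

variable {R : Type u} [CommRing R]

/-- powers of a bijective scalar action are bijective -/
lemma bij_pow_smul {M : Type u} [AddCommGroup M] [Module R M] {r : R}
    (h : Function.Bijective fun m : M => r • m) (k : ℕ) :
    Function.Bijective fun m : M => r ^ k • m := by
  induction k with
  | zero => simp only [pow_zero, one_smul]; exact Function.bijective_id
  | succ k ih =>
      have heq : (fun m : M => r ^ (k+1) • m) = (fun m : M => r ^ k • m) ∘ (fun m : M => r • m) := by
        funext m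
        show r ^ (k+1) • m = r ^ k • (r • m)
        rw [pow_succ, mul_smul]
      rw [heq]
      exact ih.comp h

lemma eq_zero_of_pow_smul_eq_zero {M : Type u} [AddCommGroup M] [Module R M] {r : R}
    (h : Function.Bijective fun m : M => r • m) {k : ℕ} {m : M}
    (hm : r ^ k • m = 0) : m = 0 := by
  have := (bij_pow_smul h k).injective (a₁ := m) (a₂ := 0)
  simp only [smul_zero] at this
  exact this hm

/-- Every element of `M ⊗ X` is `r`-power torsion if every element of `M` is. -/
lemma tensor_pow_smul_torsion {M X : Type u} [AddCommGroup M] [Module R M]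
    [AddCommGroup X] [Module R X] {r : R} (hM : ∀ m : M, ∃ k : ℕ, r ^ k • m = 0)
    (t : M ⊗[R] X) : ∃ k : ℕ, r ^ k • t = 0 := by
  induction t with
  | zero => exact ⟨0, smul_zero _⟩
  | tmul m x =>
      obtain ⟨k, hk⟩ := hM m
      exact ⟨k, by rw [smul_tmul', hk, zero_tmul]⟩
  | add a b ha hb =>
      obtain ⟨k₁, h₁⟩ := ha
      obtain ⟨k₂, h₂⟩ := hb
      refine ⟨k₁ + k₂, ?_⟩
      have e1 : r ^ (k₁ + k₂) • a = 0 := by rw [pow_add, mul_comm, mul_smul, h₁, smul_zero]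
      have e2 : r ^ (k₁ + k₂) • b = 0 := by rw [pow_add, mul_smul, h₂, smul_zero]
      rw [smul_add, e1, e2, add_zero]

end ModulePrelim

section Loc

variable {R : Type u} [CommRing R] {r : R}
variable {M : Type u} [AddCommGroup M] [Module R M]

local notation "S" => Submonoid.powers r

/-- scalar multiplication by `r^k` as a bijection on `M ⊗ X` when `r` acts bijectively on `M` -/
lemma bij_pow_smul_tensor (hM : Function.Bijective fun m : M => r • m)
    (X : Type u) [AddCommGroup X] [Module R X] (k : ℕ) :
    Function.Bijective fun t : M ⊗[R] X => r ^ k • t := by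
  have hb := bij_pow_smul (R := R) hM k
  let e : M ≃ₗ[R] M := LinearEquiv.ofBijective (LinearMap.lsmul R M (r ^ k)) hb
  have heq : (fun t : M ⊗[R] X => r ^ k • t) = ⇑(LinearEquiv.rTensor X e) := by
    funext t
    induction t with
    | zero => simp
    | tmul m x =>
        simp only [LinearEquiv.rTensor_tmul, smul_tmul']
        rfl
    | add a b ha hb => simp only [smul_add, map_add, ha, hb]
  rw [heq]
  exact (LinearEquiv.rTensor X e).bijective

/-- action of elements of `S` on `Hom(M, T)` is invertible when it is on `T` -/
lemma isUnit_algebraMap_end (T : Type u) [AddCommGroup T] [Module R T]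
    (hT : ∀ k : ℕ, Function.Bijective fun t : T => r ^ k • t) (s : S) :
    IsUnit ((algebraMap R (Module.End R (M →ₗ[R] T))) (s : R)) := by
  rw [Module.End.isUnit_iff]
  obtain ⟨k, hk⟩ := s.2
  constructor
  · intro f g hfg
    ext m
    have h1 := LinearMap.congr_fun hfg m
    rw [Module.algebraMap_end_apply, Module.algebraMap_end_apply, LinearMap.smul_apply,
      LinearMap.smul_apply, ← hk] at h1
    exact (hT k).injective h1
  · intro g
    let eT : T ≃ₗ[R] T := LinearEquiv.ofBijective (LinearMap.lsmul R T (r ^ k)) (hT k)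
    refine ⟨(eT.symm.toLinearMap).comp g, ?_⟩
    ext m
    rw [Module.algebraMap_end_apply, LinearMap.smul_apply, LinearMap.coe_comp,
      Function.comp_apply, LinearEquiv.coe_coe, ← hk]
    have h2 : r ^ k • eT.symm (g m) = eT (eT.symm (g m)) := rfl
    rw [h2, eT.apply_symm_apply]

/-- The natural map `M ⊗ X → M ⊗ (S⁻¹X)` is bijective when `r` acts bijectively on `M`. -/
lemma phi_bijective (hM : Function.Bijective fun m : M => r • m)
    (X : Type u) [AddCommGroup X] [Module R X] :
    Function.Bijective (LinearMap.lTensor M (LocalizedModule.mkLinearMap S X)) := by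
  set g₀ : X →ₗ[R] (M →ₗ[R] M ⊗[R] X) := (TensorProduct.mk R M X).flip with hg₀
  have hunit := isUnit_algebraMap_end (M := M) (M ⊗[R] X) (bij_pow_smul_tensor hM X)
  set L : LocalizedModule S X →ₗ[R] (M →ₗ[R] M ⊗[R] X) := LocalizedModule.lift S g₀ hunit with hL
  set ψ : M ⊗[R] LocalizedModule S X →ₗ[R] M ⊗[R] X := TensorProduct.lift L.flip with hψ
  have hleft : ∀ z : M ⊗[R] X, ψ (LinearMap.lTensor M (LocalizedModule.mkLinearMap S X) z) = z := by
    intro z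
    induction z with
    | zero => simp
    | tmul m x =>
        have hcomp := LocalizedModule.lift_comp S g₀ hunit
        have h3 : L (LocalizedModule.mkLinearMap S X x) = g₀ x := LinearMap.congr_fun hcomp x
        simp only [LinearMap.lTensor_tmul, hψ, TensorProduct.lift.tmul, LinearMap.flip_apply, h3,
          hg₀, TensorProduct.mk_apply]
    | add a b ha hb => simp only [map_add, ha, hb]
  constructor
  · intro a b hab
    have := congrArg ψ hab
    rwa [hleft, hleft] at this
  · intro w
    induction w with
    | zero => exact ⟨0, map_zero _⟩
    | tmul m y =>
        induction y using LocalizedModule.induction_on with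
        | h x s =>
            obtain ⟨k, hk⟩ := s.2
            obtain ⟨m', hm'⟩ := (bij_pow_smul (R := R) hM k).surjective m
            refine ⟨m' ⊗ₜ x, ?_⟩
            rw [LinearMap.lTensor_tmul, LocalizedModule.mkLinearMap_apply]
            have h1 : LocalizedModule.mk x (1 : S) = (r ^ k) • LocalizedModule.mk x s := by
              rw [LocalizedModule.smul'_mk]
              rw [LocalizedModule.mk_eq]
              refine ⟨1, ?_⟩
              simp only [one_smul, Submonoid.smul_def, hk]
            rw [h1, tmul_smul, smul_tmul']
            exact congrArg (· ⊗ₜ[R] LocalizedModule.mk x s) hm'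
    | add a b ha hb =>
        obtain ⟨za, hza⟩ := ha
        obtain ⟨zb, hzb⟩ := hb
        exact ⟨za + zb, by rw [map_add, hza, hzb]⟩

end Loc

section LocCore

variable {R : Type u} [CommRing R] {r : R}
variable {M : Type u} [AddCommGroup M] [Module R M]

set_option maxHeartbeats 1000000 in
/-- Core lemma: tensoring a projective resolution of an `r`-power-torsion module `N`
with a module `M` on which `r` acts bijectively yields an exact complex. -/
lemma loc_tensor_exact
    (hM : Function.Bijective fun m : M => r • m)
    (V : ℕ → Type u) [∀ j, AddCommGroup (V j)] [∀ j, Module R (V j)]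
    (δ : ∀ j, V (j+1) →ₗ[R] V j)
    (N : Type u) [AddCommGroup N] [Module R N] (π : V 0 →ₗ[R] N)
    (hδ : ∀ j, Function.Exact (δ (j+1)) (δ j))
    (h0 : Function.Exact (δ 0) π)
    (hproj : ∀ j, Module.Projective R (V j))
    (hN : ∀ x : N, ∃ k : ℕ, r ^ k • x = 0) :
    (∀ j, Function.Exact (LinearMap.lTensor M (δ (j+1))) (LinearMap.lTensor M (δ j)))
    ∧ Function.Surjective (LinearMap.lTensor M (δ 0)) := by
  classical
  set S : Submonoid R := Submonoid.powers r with hS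
  set A : Type u := Localization S with hA
  set Q : ℕ → Type u := fun j => LocalizedModule S (V j) with hQ
  set mk' : ∀ j, V j →ₗ[R] Q j := fun j => LocalizedModule.mkLinearMap S (V j) with hmk
  set δ' : ∀ j, Q (j+1) →ₗ[R] Q j :=
    fun j => (IsLocalizedModule.map S (mk' (j+1)) (mk' j)) (δ j) with hδ'
  -- exactness of the localized complex
  have hQex : ∀ j, Function.Exact (δ' (j+1)) (δ' j) :=
    fun j => LocalizedModule.map_exact S (δ (j+1)) (δ j) (hδ j)
  have hQ0 : Function.Exact (δ' 0)
      ((IsLocalizedModule.map S (mk' 0) (LocalizedModule.mkLinearMap S N)) π) :=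
    LocalizedModule.map_exact S (δ 0) π h0
  have locN_zero : ∀ y : LocalizedModule S N, y = 0 := by
    intro y
    induction y using LocalizedModule.induction_on with
    | h x s =>
        obtain ⟨k, hk⟩ := hN x
        rw [show (0 : LocalizedModule S N) = LocalizedModule.mk 0 1 from
          (LocalizedModule.zero_mk 1).symm, LocalizedModule.mk_eq]
        exact ⟨⟨r ^ k, ⟨k, rfl⟩⟩, by simp [Submonoid.smul_def, hk]⟩
  have hsurj0 : Function.Surjective (δ' 0) := fun y => (hQ0 y).mp (locN_zero _)
  -- A-linear versions
  set δA : ∀ j, Q (j+1) →ₗ[A] Q j :=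
    fun j => LinearMap.extendScalarsOfIsLocalization S A (δ' j) with hδA
  have hδAapp : ∀ j x, δA j x = δ' j x := fun j x =>
    LinearMap.extendScalarsOfIsLocalization_apply' S A (δ' j) x
  -- the syzygy submodules
  set W : ∀ j, Submodule A (Q j) :=
    fun j => Nat.casesOn j ⊤ (fun j' => LinearMap.ker (δA j')) with hW
  have hmem : ∀ j (x : Q (j+1)), δA j x ∈ W j := by
    intro j x
    cases j with
    | zero => trivial
    | succ j =>
        show δA (j+1) x ∈ LinearMap.ker (δA j)
        rw [LinearMap.mem_ker, hδAapp, hδAapp]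
        exact (hQex j).apply_apply_eq_zero x
  have hWsurj : ∀ j (w : ↥(W j)), ∃ x : Q (j+1), δA j x = (w : Q j) := by
    intro j w
    cases j with
    | zero =>
        obtain ⟨x, hx⟩ := hsurj0 (w : Q 0)
        exact ⟨x, by rw [hδAapp]; exact hx⟩
    | succ j =>
        have hw : δ' j (w : Q (j+1)) = 0 := by
          have h2 : δA j (w : Q (j+1)) = 0 := w.2
          rwa [hδAapp] at h2
        obtain ⟨x, hx⟩ := (hQex j _).mp hw
        exact ⟨x, by rw [hδAapp]; exact hx⟩
  -- corestriction of δA to W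
  set c : ∀ j, Q (j+1) →ₗ[A] ↥(W j) :=
    fun j => LinearMap.codRestrict (W j) (δA j) (hmem j) with hc
  have hccoe : ∀ j (x : Q (j+1)), ((c j x : Q j)) = δA j x := fun j x => rfl
  have hcsurj : ∀ j, Function.Surjective (c j) := by
    intro j w
    obtain ⟨x, hx⟩ := hWsurj j w
    exact ⟨x, Subtype.ext hx⟩
  -- projectivity of localized modules
  have hQproj : ∀ j, Module.Projective A (Q j) := by
    intro j
    haveI := hproj j
    exact Module.projective_of_isLocalizedModule S (mk' j)
  -- projectivity of the syzygies
  have hWproj : ∀ j, Module.Projective A ↥(W j) := by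
    intro j
    induction j with
    | zero => exact Module.Projective.of_equiv (Submodule.topEquiv (R := A) (M := Q 0)).symm
    | succ j ih =>
        haveI := ih
        haveI := hQproj (j+1)
        obtain ⟨τ, hτ⟩ := Module.projective_lifting_property (c j) LinearMap.id (hcsurj j)
        have key : ∀ y : ↥(W j), δA j (τ y) = (y : Q j) := by
          intro y
          rw [← hccoe j (τ y)]
          exact congrArg _ (LinearMap.congr_fun hτ y)
        have hmem2 : ∀ x : Q (j+1), x - τ (c j x) ∈ W (j+1) := by
          intro x
          show x - τ (c j x) ∈ LinearMap.ker (δA j)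
          rw [LinearMap.mem_ker, map_sub, key, hccoe, sub_self]
        refine Module.Projective.of_split (W (j+1)).subtype
          (LinearMap.codRestrict (W (j+1)) (LinearMap.id - τ ∘ₗ (c j)) hmem2) ?_
        ext w
        have hcw : c j (w : Q (j+1)) = 0 := by
          refine Subtype.ext ?_
          rw [hccoe]
          exact w.2
        show ((w : Q (j+1)) - τ (c j (w : Q (j+1)))) = (w : Q (j+1))
        rw [hcw, map_zero, sub_zero]
  -- sections of the corestrictions
  have hsec : ∀ j, ∃ σ : ↥(W j) →ₗ[A] Q (j+1), ∀ y : ↥(W j), δA j (σ y) = (y : Q j) := by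
    intro j
    haveI := hWproj j
    haveI := hQproj (j+1)
    obtain ⟨τ, hτ⟩ := Module.projective_lifting_property (c j) LinearMap.id (hcsurj j)
    refine ⟨τ, fun y => ?_⟩
    rw [← hccoe j (τ y)]
    exact congrArg _ (LinearMap.congr_fun hτ y)
  choose σ hσ using hsec
  -- R-linear restrictions
  set ιR : ∀ j, ↥(W j) →ₗ[R] Q j := fun j => ((W j).subtype).restrictScalars R with hιR
  set cR : ∀ j, Q (j+1) →ₗ[R] ↥(W j) := fun j => (c j).restrictScalars R with hcR
  set σR : ∀ j, ↥(W j) →ₗ[R] Q (j+1) := fun j => (σ j).restrictScalars R with hσR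
  have E1 : ∀ j, δ' j = (ιR j) ∘ₗ (cR j) := by
    intro j
    ext x
    show δ' j x = ((c j x : Q j))
    rw [hccoe, hδAapp]
  have E3 : ∀ j, (δ' j) ∘ₗ (σR j) = ιR j := by
    intro j
    ext y
    show δ' j (σ j y) = (y : Q j)
    rw [← hδAapp]
    exact hσ j y
  -- retractions of the inclusions
  have retrAll : ∀ j, ∃ ρ : Q j →ₗ[R] ↥(W j), ρ ∘ₗ ιR j = LinearMap.id := by
    intro j
    cases j with
    | zero =>
        refine ⟨(LinearMap.codRestrict (W 0) LinearMap.id (fun x => trivial)).restrictScalars R,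
          ?_⟩
        ext w
        rfl
    | succ j =>
        haveI := hWproj j
        haveI := hQproj (j+1)
        obtain ⟨τ, hτ⟩ := Module.projective_lifting_property (c j) LinearMap.id (hcsurj j)
        have key : ∀ y : ↥(W j), δA j (τ y) = (y : Q j) := by
          intro y
          rw [← hccoe j (τ y)]
          exact congrArg _ (LinearMap.congr_fun hτ y)
        have hmem2 : ∀ x : Q (j+1), x - τ (c j x) ∈ W (j+1) := by
          intro x
          show x - τ (c j x) ∈ LinearMap.ker (δA j)
          rw [LinearMap.mem_ker, map_sub, key, hccoe, sub_self]
        refine ⟨(LinearMap.codRestrict (W (j+1)) (LinearMap.id - τ ∘ₗ (c j))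
          hmem2).restrictScalars R, ?_⟩
        ext w
        have hcw : c j (w : Q (j+1)) = 0 := by
          refine Subtype.ext ?_
          rw [hccoe]
          exact w.2
        show ((w : Q (j+1)) - τ (c j (w : Q (j+1)))) = (w : Q (j+1))
        rw [hcw, map_zero, sub_zero]
  -- the decomposition identity
  have retr2 : ∀ j, ∃ (ρ : Q (j+1) →ₗ[R] ↥(W (j+1))),
      (ιR (j+1)) ∘ₗ ρ + (σR j) ∘ₗ (cR j) = LinearMap.id := by
    intro j
    have hmem2 : ∀ x : Q (j+1), x - σ j (c j x) ∈ W (j+1) := by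
      intro x
      show x - σ j (c j x) ∈ LinearMap.ker (δA j)
      rw [LinearMap.mem_ker, map_sub, hσ j, hccoe, sub_self]
    refine ⟨(LinearMap.codRestrict (W (j+1)) (LinearMap.id - (σ j) ∘ₗ (c j))
      hmem2).restrictScalars R, ?_⟩
    ext x
    show (x - σ j (c j x)) + σ j (c j x) = x
    rw [sub_add_cancel]
  -- injectivity of `lTensor` of the inclusions
  have hinjW : ∀ j, Function.Injective (LinearMap.lTensor M (ιR j)) := by
    intro j
    obtain ⟨ρ, hρ⟩ := retrAll j
    have : ∀ z, LinearMap.lTensor M ρ (LinearMap.lTensor M (ιR j) z) = z := by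
      intro z
      rw [← LinearMap.comp_apply, ← LinearMap.lTensor_comp, hρ, LinearMap.lTensor_id]
      rfl
    exact Function.LeftInverse.injective this
  -- exactness of the localized tensored complex
  have ExQ : ∀ j, ∀ z : M ⊗[R] Q (j+1), LinearMap.lTensor M (δ' j) z = 0 →
      ∃ u, LinearMap.lTensor M (δ' (j+1)) u = z := by
    intro j z hz
    have hz2 : LinearMap.lTensor M (ιR j) (LinearMap.lTensor M (cR j) z) = 0 := by
      rw [← LinearMap.comp_apply, ← LinearMap.lTensor_comp, ← E1 j]
      exact hz
    have hcz : LinearMap.lTensor M (cR j) z = 0 := by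
      apply hinjW j
      rw [hz2, map_zero]
    obtain ⟨ρ, hsum⟩ := retr2 j
    have hzdec : z = LinearMap.lTensor M (ιR (j+1)) (LinearMap.lTensor M ρ z) := by
      have h4 : LinearMap.lTensor M ((ιR (j+1)) ∘ₗ ρ + (σR j) ∘ₗ (cR j)) z = z := by
        rw [hsum, LinearMap.lTensor_id]
        rfl
      rw [LinearMap.lTensor_add, LinearMap.add_apply, LinearMap.lTensor_comp,
        LinearMap.lTensor_comp, LinearMap.comp_apply, LinearMap.comp_apply, hcz, map_zero,
        add_zero] at h4
      exact h4.symm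
    refine ⟨LinearMap.lTensor M (σR (j+1)) (LinearMap.lTensor M ρ z), ?_⟩
    rw [← LinearMap.comp_apply, ← LinearMap.lTensor_comp, E3 (j+1)]
    exact hzdec.symm
  have ExQ0 : Function.Surjective (LinearMap.lTensor M (δ' 0)) := by
    intro z
    obtain ⟨ρ, hρ⟩ := retrAll 0
    refine ⟨LinearMap.lTensor M (σR 0) (LinearMap.lTensor M ρ z), ?_⟩
    rw [← LinearMap.comp_apply, ← LinearMap.lTensor_comp, E3 0]
    have h5 : (ιR 0) ∘ₗ ρ = LinearMap.id := by
      ext x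
      exact congrArg (ιR 0) (LinearMap.congr_fun hρ ⟨x, trivial⟩)
    rw [← LinearMap.comp_apply, ← LinearMap.lTensor_comp, h5, LinearMap.lTensor_id]
    rfl
  -- the comparison isomorphisms
  have hφ : ∀ j, Function.Bijective (LinearMap.lTensor M (mk' j)) :=
    fun j => phi_bijective hM (V j)
  have hcomm : ∀ j (u : M ⊗[R] V (j+1)),
      LinearMap.lTensor M (δ' j) (LinearMap.lTensor M (mk' (j+1)) u)
        = LinearMap.lTensor M (mk' j) (LinearMap.lTensor M (δ j) u) := by
    intro j u
    rw [← LinearMap.comp_apply, ← LinearMap.lTensor_comp, IsLocalizedModule.map_comp,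
      LinearMap.lTensor_comp, LinearMap.comp_apply]
  constructor
  · intro j
    rw [LinearMap.exact_iff]
    apply le_antisymm
    · rintro z hz
      rw [LinearMap.mem_ker] at hz
      have hz3 : LinearMap.lTensor M (δ' j) (LinearMap.lTensor M (mk' (j+1)) z) = 0 := by
        rw [hcomm j z, hz, map_zero]
      obtain ⟨u, hu⟩ := ExQ j _ hz3
      obtain ⟨v, hv⟩ := (hφ (j+2)).surjective u
      rw [← hv, hcomm (j+1) v] at hu
      refine LinearMap.mem_range.mpr ⟨v, ?_⟩
      exact (hφ (j+1)).injective hu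
    · rintro z ⟨u, hu⟩
      rw [LinearMap.mem_ker, ← hu, ← LinearMap.comp_apply, ← LinearMap.lTensor_comp]
      have h6 : (δ j) ∘ₗ (δ (j+1)) = 0 := by
        ext x
        exact (hδ j).apply_apply_eq_zero x
      rw [h6, LinearMap.lTensor_zero]
      rfl
  · intro y
    obtain ⟨u, hu⟩ := ExQ0 (LinearMap.lTensor M (mk' 0) y)
    obtain ⟨v, hv⟩ := (hφ 1).surjective u
    rw [← hv, hcomm 0 v] at hu
    exact ⟨v, (hφ 0).injective hu⟩

end LocCore

section CatGlue

open CategoryTheory Limits MonoidalCategory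

variable {R : Type u} [CommRing R]

lemma eq_zero_of_isZero {X : ModuleCat.{u} R} (h : IsZero X) (x : X) : x = 0 := by
  have h1 : (𝟙 X : X ⟶ X) = 0 := h.eq_of_src _ _
  calc x = (𝟙 X : X ⟶ X) x := rfl
  _ = (0 : X ⟶ X) x := by rw [h1]
  _ = 0 := rfl

/-- elements of the homology of a short complex of modules are `r`-power torsion
if those of the middle object are -/
lemma homology_torsion (S : CategoryTheory.ShortComplex (ModuleCat.{u} R)) (r : R)
    (h : ∀ x : S.X₂, ∃ k : ℕ, r ^ k • x = 0) :
    ∀ y : S.homology, ∃ k : ℕ, r ^ k • y = 0 := by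
  intro y
  set e := S.moduleCatHomologyIso with he
  set z := e.hom y with hz
  obtain ⟨w, hw⟩ := Submodule.Quotient.mk_surjective _ z
  obtain ⟨k, hk⟩ := h (w : S.X₂)
  have hwz : r ^ k • w = (0 : LinearMap.ker S.g.hom) := Subtype.ext (by simpa using hk)
  have hzz : r ^ k • z = 0 := by
    rw [← hw]
    exact (Submodule.Quotient.mk_smul _ (r ^ k) w).symm.trans (by rw [hwz]; rfl)
  refine ⟨k, ?_⟩
  calc r ^ k • y = r ^ k • (e.inv (e.hom y)) :=
        (congrArg (fun t => r ^ k • t) (e.hom_inv_id_apply y)).symm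
  _ = e.inv (r ^ k • z) := by rw [← hz, map_smul]
  _ = e.inv 0 := by rw [hzz]
  _ = 0 := map_zero _

end CatGlue

section DER

open CategoryTheory Limits MonoidalCategory

variable {R : Type u} [CommRing R]

/-- the `shortComplexFunctor` commutes with scalar multiplication of chain maps -/
lemma sc_map_smul {K L : HomologicalComplex (ModuleCat.{u} R) (ComplexShape.down ℕ)}
    (φ : K ⟶ L) (r : R) (i : ℕ) :
    (HomologicalComplex.shortComplexFunctor (ModuleCat.{u} R) (ComplexShape.down ℕ) i).map
      (r • φ) = r • (HomologicalComplex.shortComplexFunctor (ModuleCat.{u} R)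
        (ComplexShape.down ℕ) i).map φ := by
  refine CategoryTheory.ShortComplex.Hom.ext ?_ ?_ ?_ <;> rfl

theorem der_tor_subsingleton (M N : Type u) [AddCommGroup M] [Module R M]
    [AddCommGroup N] [Module R N] (r : R)
    (hM : ∀ m : M, ∃ k : ℕ, r ^ k • m = 0)
    (hN : Function.Bijective fun n : N => r • n) (i : ℕ) :
    Subsingleton ((((Tor (ModuleCat.{u} R) i).obj (ModuleCat.of R M)).obj
      (ModuleCat.of R N)) : Type u) := by
  classical
  set C := ModuleCat.{u} R
  set Mc : C := ModuleCat.of R M with hMc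
  set Nc : C := ModuleCat.of R N with hNc
  set F : C ⥤ C := (tensoringLeft C).obj Mc with hF
  have P : ProjectiveResolution Nc := (HasProjectiveResolution.out (Z := Nc)).some
  set K := (F.mapHomologicalComplex (ComplexShape.down ℕ)).obj P.complex with hK
  set T : C := (F.leftDerived i).obj Nc with hT
  set iso0 : T ≅ (HomologicalComplex.homologyFunctor C (ComplexShape.down ℕ) i).obj K :=
    P.isoLeftDerivedObj F i with hiso0
  show Subsingleton T
  -- the morphism r • 𝟙 N
  set f : Nc ⟶ Nc := r • 𝟙 Nc with hf
  have hfapp : ∀ x : Nc, f x = r • x := fun x => rfl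
  have hfbij : Function.Bijective f := hN
  letI : IsIso f := by
    refine ⟨ModuleCat.ofHom (LinearEquiv.ofBijective f.hom hfbij).symm.toLinearMap, ?_, ?_⟩
    · ext x
      exact (LinearEquiv.ofBijective f.hom hfbij).symm_apply_apply x
    · ext x
      exact (LinearEquiv.ofBijective f.hom hfbij).apply_symm_apply x
  -- the lifted chain map
  set φ : P.complex ⟶ P.complex := r • 𝟙 P.complex with hφ
  have comm : φ.f 0 ≫ P.π.f 0 = P.π.f 0 ≫ f := by
    ext x
    show P.π.f 0 (φ.f 0 x) = f (P.π.f 0 x)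
    show P.π.f 0 (r • x) = r • (P.π.f 0 x)
    exact map_smul _ _ _
  have nat := ProjectiveResolution.isoLeftDerivedObj_hom_naturality f P P φ comm F i
  -- identify the induced chain map with scalar multiplication
  have hmapφ : (F.mapHomologicalComplex (ComplexShape.down ℕ)).map φ = r • 𝟙 K := by
    rw [hφ, Functor.map_smul, CategoryTheory.Functor.map_id]
  have hhom : (F.mapHomologicalComplex (ComplexShape.down ℕ) ⋙
      HomologicalComplex.homologyFunctor C (ComplexShape.down ℕ) i).map φ
        = r • 𝟙 ((HomologicalComplex.homologyFunctor C (ComplexShape.down ℕ) i).obj K) := by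
    show HomologicalComplex.homologyMap ((F.mapHomologicalComplex _).map φ) i = _
    rw [hmapφ]
    show CategoryTheory.ShortComplex.homologyMap
      ((HomologicalComplex.shortComplexFunctor _ _ i).map (r • 𝟙 K)) = _
    rw [sc_map_smul, CategoryTheory.ShortComplex.homologyMap_smul]
    show r • HomologicalComplex.homologyMap (𝟙 K) i = _
    rw [HomologicalComplex.homologyMap_id]
    rfl
  have hder : (F.leftDerived i).map f = r • 𝟙 T := by
    have h2 : (F.leftDerived i).map f = iso0.hom ≫ (r • 𝟙 _) ≫ iso0.inv := by
      rw [← hhom]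
      rw [← Category.assoc, ← nat, Category.assoc, Iso.hom_inv_id, Category.comp_id]
    rw [h2, Linear.smul_comp, Category.id_comp, Linear.comp_smul, Iso.hom_inv_id]
  have hbijT : Function.Bijective fun x : T => r • x := by
    haveI : IsIso ((F.leftDerived i).map f) := inferInstance
    haveI : IsIso (r • 𝟙 T) := by rw [← hder]; infer_instance
    have hb := ConcreteCategory.bijective_of_isIso (r • 𝟙 T)
    have he : ⇑(ConcreteCategory.hom (r • 𝟙 T)) = fun x : T => r • x := rfl
    rwa [he] at hb
  -- torsion
  have htorsK : ∀ x : (K.sc i).X₂, ∃ k : ℕ, r ^ k • x = 0 := by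
    intro x
    exact tensor_pow_smul_torsion (X := (P.complex.X i : Type u)) hM x
  have htorsH := homology_torsion (K.sc i) r htorsK
  have htorsT : ∀ x : T, ∃ k : ℕ, r ^ k • x = 0 := by
    intro x
    obtain ⟨k, hk⟩ := htorsH (iso0.hom x)
    refine ⟨k, ?_⟩
    calc r ^ k • x = r ^ k • (iso0.inv (iso0.hom x)) :=
          (congrArg (fun t => r ^ k • t) (iso0.hom_inv_id_apply x)).symm
    _ = iso0.inv (r ^ k • iso0.hom x) := by rw [map_smul]
    _ = 0 := (congrArg iso0.inv hk).trans (map_zero _)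
  refine subsingleton_of_forall_eq 0 fun x => ?_
  obtain ⟨k, hk⟩ := htorsT x
  exact eq_zero_of_pow_smul_eq_zero (R := R) hbijT hk

end DER

section LOC

open CategoryTheory Limits MonoidalCategory

variable {R : Type u} [CommRing R]

theorem loc_tor_subsingleton (M N : Type u) [AddCommGroup M] [Module R M]
    [AddCommGroup N] [Module R N] (r : R)
    (hM : Function.Bijective fun m : M => r • m)
    (hN : ∀ n : N, ∃ k : ℕ, r ^ k • n = 0) (i : ℕ) :
    Subsingleton ((((Tor (ModuleCat.{u} R) i).obj (ModuleCat.of R M)).obj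
      (ModuleCat.of R N)) : Type u) := by
  classical
  set C := ModuleCat.{u} R
  set Mc : C := ModuleCat.of R M with hMc
  set Nc : C := ModuleCat.of R N with hNc
  set F : C ⥤ C := (tensoringLeft C).obj Mc with hF
  have P : ProjectiveResolution Nc := (HasProjectiveResolution.out (Z := Nc)).some
  set K := (F.mapHomologicalComplex (ComplexShape.down ℕ)).obj P.complex with hK
  set T : C := (F.leftDerived i).obj Nc with hT
  set iso0 : T ≅ (HomologicalComplex.homologyFunctor C (ComplexShape.down ℕ) i).obj K :=
    P.isoLeftDerivedObj F i with hiso0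
  show Subsingleton T
  -- module-level data of the resolution
  set V : ℕ → Type u := fun j => (P.complex.X j : Type u) with hV
  set δ : ∀ j, V (j+1) →ₗ[R] V j := fun j => (P.complex.d (j+1) j).hom with hδdef
  have hδ : ∀ j, Function.Exact (δ (j+1)) (δ j) := by
    intro j
    exact (CategoryTheory.ShortComplex.ShortExact.moduleCat_exact_iff_function_exact _).1
      (P.exact_succ j)
  set π : V 0 →ₗ[R] N := (P.π.f 0 : P.complex.X 0 ⟶ Nc).hom with hπdef
  have hπs : Function.Surjective π := by
    have : Epi (P.π.f 0) := inferInstance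
    exact (ModuleCat.epi_iff_surjective (P.π.f 0)).1 this
  have h0 : Function.Exact (δ 0) π := by
    set S0 : CategoryTheory.ShortComplex C :=
      CategoryTheory.ShortComplex.mk (P.complex.d 1 0) (P.π.f 0)
        P.complex_d_comp_π_f_zero with hS0
    have hS0exact : S0.Exact :=
      ((CategoryTheory.ShortComplex.exact_and_epi_g_iff_g_is_cokernel S0).mpr
        ⟨P.isColimitCokernelCofork⟩).1
    exact (CategoryTheory.ShortComplex.ShortExact.moduleCat_exact_iff_function_exact S0).1
      hS0exact
  have hproj : ∀ j, Module.Projective R (V j) := by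
    intro j
    exact (_root_.IsProjective.iff_projective (V j)).mpr (P.projective j)
  obtain ⟨hex, hsurj⟩ := loc_tensor_exact hM V δ N π hδ h0 hproj hN
  -- exactness of the tensored complex at spot i
  have hKex : K.ExactAt i := by
    cases i with
    | zero =>
        rw [K.exactAt_iff' 1 0 0 (by simp) (by simp)]
        rw [CategoryTheory.ShortComplex.moduleCat_exact_iff]
        intro x₂ _
        obtain ⟨u, hu⟩ := hsurj x₂
        exact ⟨u, hu⟩
    | succ n =>
        rw [K.exactAt_iff' (n+2) (n+1) n (by simp) (by simp)]
        rw [CategoryTheory.ShortComplex.moduleCat_exact_iff]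
        intro x₂ hx
        obtain ⟨u, hu⟩ := (hex n x₂).1 hx
        exact ⟨u, hu⟩
  have hzero : IsZero (K.homology i) := (K.exactAt_iff_isZero_homology i).1 hKex
  refine subsingleton_of_forall_eq 0 fun x => ?_
  have h1 : iso0.hom x = 0 := eq_zero_of_isZero hzero _
  calc x = iso0.inv (iso0.hom x) := (iso0.hom_inv_id_apply x).symm
  _ = iso0.inv 0 := by rw [h1]
  _ = 0 := map_zero _

end LOC

end AuxStatement2

/-- If `M` satisfies `t(p)`, `N` satisfies `t(q)` and `p ≠ q`, then
`Tor_i^R(M, N) = 0` for all `i ≥ 0`. -/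
theorem statement2 (R : Type u) [CommRing R] [IsNoetherianRing R]
    (M N : Type u) [AddCommGroup M] [Module R M] [AddCommGroup N] [Module R N]
    (p q : Ideal R) (hp : p.IsPrime) (hq : q.IsPrime) (hpq : p ≠ q)
    (hM : PropT R p M) (hN : PropT R q N) :
    ∀ i : ℕ, Subsingleton (TorM R i M N) := by
  intro i
  by_cases hle : p ≤ q
  · have hne : ¬ q ≤ p := fun h => hpq (le_antisymm hle h)
    obtain ⟨r, hrq, hrp⟩ := SetLike.not_le_iff_exists.mp hne
    refine loc_tor_subsingleton M N r (hM.1 r hrp) (fun n => ?_) i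
    obtain ⟨m, _, hann⟩ := hN.2 n
    exact ⟨m, hann _ (Ideal.pow_mem_pow hrq m)⟩
  · obtain ⟨r, hrp, hrq⟩ := SetLike.not_le_iff_exists.mp hle
    refine der_tor_subsingleton M N r (fun x => ?_) (hN.1 r hrq) i
    obtain ⟨m, _, hann⟩ := hM.2 x
    exact ⟨m, hann _ (Ideal.pow_mem_pow hrp m)⟩
end

section
/- Let R be a commutative noetherian ring satisfying Serre's condition (S_1), let p be a prime ideal of R with ht(p) ≥ 1, and let T be an R-module with property t(p). Then for any Gorenstein injective R-module G one has G ⊗_R T = 0. -/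
/-!
Common definitions: property t(p), injective hulls, (C-)Gorenstein injective modules,
(C-)Gorenstein injective / injective / flat dimensions, small support, torsion functor,
Tor and Ext modules, semidualizing and dualizing modules, depth, Cohen-Macaulay rings,
Serre's condition (S₁), Gorenstein local rings, minimal injective resolutions.
-/

universe u

open CategoryTheory Limits DirectSum

section Aux

open RingTheory.Sequence IsLocalization

/-- In an (S₁) noetherian ring, an ideal of height ≥ 1 contains a regular element. -/
lemma aux_exists_regular (R : Type u) [CommRing R] [IsNoetherianRing R] (hR : SerreS1 R)
    (p : Ideal R) (hp : p.IsPrime)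
    (hht : 1 ≤ Order.height (⟨p, hp⟩ : PrimeSpectrum R)) :
    ∃ r ∈ p, ∀ x : R, r * x = 0 → x = 0 := by
  by_contra hcon
  push_neg at hcon
  -- every associated prime is minimal
  have hmin : ∀ q, ∀ hq : q ∈ associatedPrimes R R, IsMin (⟨q, hq.1⟩ : PrimeSpectrum R) := by
    intro q hq
    have hqp := hq.1
    obtain ⟨x, hx⟩ := (isAssociatedPrime_iff.mp hq).2
    rw [Submodule.bot_colon'] at hx
    have hx1 : (algebraMap R (Localization.AtPrime q)) x ≠ 0 := by
      intro h0
      rw [IsLocalization.map_eq_zero_iff q.primeCompl] at h0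
      obtain ⟨m, hm⟩ := h0
      have hma : (m : R) ∈ (Submodule.span R {x}).annihilator := by
        rw [Submodule.mem_annihilator]
        intro n hn
        obtain ⟨c, rfl⟩ := Submodule.mem_span_singleton.mp hn
        simp only [smul_eq_mul]
        rw [mul_left_comm, hm, mul_zero]
      rw [← hx] at hma
      exact m.2 hma
    have hdepth : localRingDepth (Localization.AtPrime q) ≤ 0 := by
      apply sSup_le
      rintro n ⟨rs, hmem, hreg, hlen⟩
      match rs, hmem, hreg, hlen with
      | [], _, _, hlen => simpa using hlen.symm.le
      | (r :: tl), hmem, hreg, hlen =>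
        exfalso
        have hrreg : IsSMulRegular (Localization.AtPrime q) r :=
          ((RingTheory.Sequence.isWeaklyRegular_cons_iff _ r tl).mp
            hreg.toIsWeaklyRegular).1
        have hrmem : r ∈ IsLocalRing.maximalIdeal (Localization.AtPrime q) :=
          hmem r List.mem_cons_self
        obtain ⟨⟨a, s⟩, rfl⟩ := IsLocalization.mk'_surjective q.primeCompl r
        have haq : a ∈ q := (IsLocalization.AtPrime.mk'_mem_maximal_iff _ q a s).mp hrmem
        have hax : a * x = 0 := by
          have : a ∈ (Submodule.span R {x}).annihilator := hx ▸ haq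
          simpa [smul_eq_mul] using Submodule.mem_annihilator.mp this x
            (Submodule.mem_span_singleton_self x)
        have : IsLocalization.mk' (Localization.AtPrime q) a s •
            (algebraMap R (Localization.AtPrime q)) x = 0 := by
          rw [smul_eq_mul, ← IsLocalization.mk'_one (M := q.primeCompl)
            (Localization.AtPrime q) x, ← IsLocalization.mk'_mul, hax,
            IsLocalization.mk'_zero]
        exact hx1 (hrreg (by simpa using this))
    have h1 : min (Order.height (⟨q, hqp⟩ : PrimeSpectrum R)) 1 ≤ 0 :=
      (hR q hqp).trans hdepth
    have hzero : Order.height (⟨q, hqp⟩ : PrimeSpectrum R) = 0 := by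
      by_contra h0
      have : (1 : ℕ∞) ≤ Order.height (⟨q, hqp⟩ : PrimeSpectrum R) :=
        ENat.one_le_iff_ne_zero.mpr h0
      simp [min_eq_right this] at h1
    exact Order.height_eq_zero.mp hzero
  -- p is contained in the union of the (finitely many) minimal primes
  have hfin : {x : PrimeSpectrum R | IsMin x}.Finite := PrimeSpectrum.finite_setOf_isMin R
  classical
  have hsub : (p : Set R) ⊆ ⋃ x ∈ (hfin.toFinset : Set (PrimeSpectrum R)), x.asIdeal := by
    intro r hr
    obtain ⟨y, hyr, hy0⟩ := hcon r hr
    have hrzd : r ∈ ⋃ q ∈ associatedPrimes R R, (q : Set R) := by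
      rw [biUnion_associatedPrimes_eq_zero_divisors]
      exact ⟨y, hy0, hyr⟩
    obtain ⟨q, hq, hrq⟩ := Set.mem_iUnion₂.mp hrzd
    have hqmem : (⟨q, hq.1⟩ : PrimeSpectrum R) ∈ (hfin.toFinset : Set (PrimeSpectrum R)) := by
      simp only [Set.Finite.coe_toFinset, Set.mem_setOf_eq]
      exact hmin q hq
    exact Set.mem_biUnion hqmem hrq
  rw [Ideal.subset_union_prime (⟨p, hp⟩ : PrimeSpectrum R) (⟨p, hp⟩ : PrimeSpectrum R)
    (fun i _ _ _ => i.2)] at hsub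
  obtain ⟨x, hxs, hpx⟩ := hsub
  have hxmin : IsMin x := hfin.mem_toFinset.mp hxs
  have hpmin : IsMin (⟨p, hp⟩ : PrimeSpectrum R) := by
    intro b hb
    have hbx : b ≤ x := le_trans hb hpx
    exact le_trans hpx (hxmin hbx)
  rw [Order.height_eq_zero.mpr hpmin] at hht
  simp at hht

/-- Injective modules are divisible by regular elements. -/
lemma aux_inj_divisible {R : Type u} [CommRing R] (E : Type u) [AddCommGroup E] [Module R E]
    (hE : Module.Injective R E) (r : R) (hr : ∀ x : R, r * x = 0 → x = 0) (e : E) :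
    ∃ e', r • e' = e := by
  have hinj : Function.Injective (LinearMap.toSpanSingleton R R r) := by
    intro x y hxy
    simp only [LinearMap.toSpanSingleton_apply, smul_eq_mul] at hxy
    have h0 : r * (x - y) = 0 := by
      have := sub_eq_zero_of_eq hxy
      rw [mul_sub, mul_comm r x, mul_comm r y]
      exact this
    exact sub_eq_zero.mp (hr _ h0)
  obtain ⟨h, hh⟩ := hE.out (LinearMap.toSpanSingleton R R r) hinj
    (LinearMap.toSpanSingleton R E e)
  refine ⟨h 1, ?_⟩
  have h1 := hh 1
  simp only [LinearMap.toSpanSingleton_apply, one_smul] at h1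
  rw [← h1, ← map_smul]
  congr 1
  simp [smul_eq_mul]

end Aux

/-- Over an `(S₁)` noetherian ring, if `ht p ≥ 1` and `T` satisfies `t(p)`, then
`G ⊗_R T = 0` for every Gorenstein injective module `G`. -/
theorem statement4 (R : Type u) [CommRing R] [IsNoetherianRing R] (hR : SerreS1 R)
    (p : Ideal R) (hp : p.IsPrime)
    (hht : 1 ≤ Order.height (⟨p, hp⟩ : PrimeSpectrum R))
    (T : Type u) [AddCommGroup T] [Module R T] (hT : PropT R p T)
    (G : Type u) [AddCommGroup G] [Module R G] (hG : GorensteinInjective R G) :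
    Subsingleton (TensorProduct R G T) := by
  obtain ⟨r, hrp, hr⟩ := aux_exists_regular R hR p hp hht
  obtain ⟨X, ⟨eG⟩⟩ := hG
  have key : ∀ z : TensorProduct R G T, z = 0 := by
    intro z
    induction z using TensorProduct.induction_on with
    | zero => rfl
    | tmul g t =>
      obtain ⟨m, _, hmt⟩ := hT.2 t
      have hregk : ∀ (k : ℕ) (x : R), r ^ k * x = 0 → x = 0 := by
        intro k
        induction k with
        | zero => intro x hx; simpa using hx
        | succ k ih =>
          intro x hx
          rw [pow_succ, mul_assoc] at hx
          exact hr x (ih (r * x) hx)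
      have hreg : ∀ x : R, r ^ m * x = 0 → x = 0 := hregk m
      have hdiv : ∃ g' : G, (r ^ m : R) • g' = g := by
        obtain ⟨e, he⟩ := (eG g).2
        obtain ⟨e', he'⟩ := aux_inj_divisible (X.E 0) (X.inj 0) (r ^ m) hreg e
        refine ⟨eG.symm ⟨X.d 0 e', ⟨e', rfl⟩⟩, ?_⟩
        rw [← map_smul]
        have : (r ^ m : R) • (⟨X.d 0 e', ⟨e', rfl⟩⟩ : LinearMap.range (X.d 0)) = eG g := by
          apply Subtype.ext
          simp only [SetLike.val_smul]
          change (r ^ m : R) • X.d 0 e' = _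
          rw [← map_smul, he', he]
        rw [this, LinearEquiv.symm_apply_apply]
      obtain ⟨g', hg'⟩ := hdiv
      have htzero : (r ^ m : R) • t = 0 := hmt _ (Ideal.pow_mem_pow hrp m)
      calc g ⊗ₜ[R] t = ((r ^ m : R) • g') ⊗ₜ[R] t := by rw [hg']
        _ = g' ⊗ₜ[R] ((r ^ m : R) • t) := TensorProduct.smul_tmul _ _ _
        _ = g' ⊗ₜ[R] (0 : T) := by rw [htzero]
        _ = 0 := TensorProduct.tmul_zero _ _
    | add x y hx hy => rw [hx, hy, add_zero]
  exact ⟨fun a b => by rw [key a, key b]⟩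
end

section
/- Let R be a commutative noetherian ring satisfying Serre's condition (S_1) and let D be a finitely generated R-module. If p ∈ Spec(R) with ht(p) ≥ 1, then for any Gorenstein injective R-module G one has Hom_R(D, E_R(R/p)) ⊗_R G = 0, where E_R(R/p) is the injective hull of R/p. -/
/-!
Common definitions: property t(p), injective hulls, (C-)Gorenstein injective modules,
(C-)Gorenstein injective / injective / flat dimensions, small support, torsion functor,
Tor and Ext modules, semidualizing and dualizing modules, depth, Cohen-Macaulay rings,
Serre's condition (S₁), Gorenstein local rings, minimal injective resolutions.
-/

universe u

open CategoryTheory Limits DirectSum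

section Aux

variable {R : Type u} [CommRing R]

/-- An injective module is divisible by a non-zero-divisor. -/
lemma aux_div_of_injective {I : Type u} [AddCommGroup I] [Module R I]
    (hI : Module.Injective R I) {x : R} (hx : ∀ r : R, x * r = 0 → r = 0) (e : I) :
    ∃ e' : I, x • e' = e := by
  have hinj : Function.Injective (LinearMap.lsmul R R x) := by
    intro a b hab
    simp only [LinearMap.lsmul_apply, smul_eq_mul] at hab
    have h0 : x * (a - b) = 0 := by rw [mul_sub, hab, sub_self]
    exact sub_eq_zero.mp (hx _ h0)
  obtain ⟨h, hh⟩ := hI.out (LinearMap.lsmul R R x) hinj (LinearMap.toSpanSingleton R I e)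
  refine ⟨h 1, ?_⟩
  have h1 := hh 1
  simp only [LinearMap.lsmul_apply, smul_eq_mul, mul_one, LinearMap.toSpanSingleton_apply,
    one_smul] at h1
  rw [← h1, ← map_smul, smul_eq_mul, mul_one]

/-- Every element of an essential extension of `R ⧸ p` is annihilated by a power of each
element of `p` (over a noetherian ring). -/
lemma aux_tors [IsNoetherianRing R] {p : Ideal R} {E : Type u} [AddCommGroup E] [Module R E]
    (ι : (R ⧸ p) →ₗ[R] E)
    (hess : ∀ K : Submodule R E, K ≠ ⊥ → K ⊓ LinearMap.range ι ≠ ⊥)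
    {x : R} (hxp : x ∈ p) (e : E) : ∃ m : ℕ, x ^ m • e = 0 := by
  classical
  have hmono : ∀ n, LinearMap.ker (LinearMap.toSpanSingleton R E (x ^ n • e)) ≤
      LinearMap.ker (LinearMap.toSpanSingleton R E (x ^ (n + 1) • e)) := by
    intro n r hr
    simp only [LinearMap.mem_ker, LinearMap.toSpanSingleton_apply] at hr ⊢
    rw [pow_succ', mul_smul, smul_comm r x, hr, smul_zero]
  set f : ℕ →o Ideal R :=
    ⟨fun n => LinearMap.ker (LinearMap.toSpanSingleton R E (x ^ n • e)),
      monotone_nat_of_le_succ hmono⟩ with hf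
  obtain ⟨N, hN⟩ := monotone_stabilizes_iff_noetherian.mpr inferInstance f
  refine ⟨N, ?_⟩
  by_contra hy
  have hK : (Submodule.span R {x ^ N • e}) ≠ ⊥ := by
    simpa [Submodule.span_singleton_eq_bot] using hy
  obtain ⟨z, hz, hz0⟩ := (Submodule.ne_bot_iff _).mp (hess _ hK)
  obtain ⟨r, hr⟩ := Submodule.mem_span_singleton.mp hz.1
  have hxz : x • z = 0 := by
    obtain ⟨c, hc⟩ := hz.2
    obtain ⟨c', rfl⟩ := Submodule.Quotient.mk_surjective p c
    rw [← hc, ← map_smul]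
    have hmk : x • (Submodule.Quotient.mk c' : R ⧸ p) = 0 := by
      rw [← Submodule.Quotient.mk_smul]
      exact (Submodule.Quotient.mk_eq_zero p).mpr
        (by simpa [smul_eq_mul] using p.mul_mem_right c' hxp)
    rw [hmk, map_zero]
  have hkey : r • (x ^ (N + 1) • e) = 0 := by
    rw [pow_succ', mul_smul, smul_comm r x, hr, hxz]
  have hrmem : r ∈ f (N + 1) := by
    simp only [hf, OrderHom.coe_mk, LinearMap.mem_ker, LinearMap.toSpanSingleton_apply]
    exact hkey
  rw [← hN (N + 1) (Nat.le_succ N)] at hrmem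
  simp only [hf, OrderHom.coe_mk, LinearMap.mem_ker, LinearMap.toSpanSingleton_apply] at hrmem
  exact hz0 (by rw [← hr, hrmem])

/-- If `q` is an associated prime of `R`, the localization at `q` has depth zero. -/
lemma aux_depth_zero {q : Ideal R} (hq : q.IsPrime) (y : R) (hy0 : y ≠ 0)
    (hann : q = (Submodule.span R {y}).annihilator) :
    localRingDepth (Localization.AtPrime q) = 0 := by
  haveI := hq
  set A := Localization.AtPrime q with hA
  have hy1 : algebraMap R A y ≠ 0 := by
    intro h0
    obtain ⟨⟨m, hm⟩, hmy⟩ := (IsLocalization.map_eq_zero_iff q.primeCompl A y).mp h0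
    exact hm (hann ▸ (Submodule.mem_annihilator_span_singleton y m).mpr
      (by rw [smul_eq_mul]; exact hmy))
  have hkill : ∀ s ∈ IsLocalRing.maximalIdeal A, s * algebraMap R A y = 0 := by
    intro s hs
    rw [← Localization.AtPrime.map_eq_maximalIdeal] at hs
    obtain ⟨⟨⟨a, ha⟩, ⟨t, ht⟩⟩, hat⟩ := (IsLocalization.mem_map_algebraMap_iff q.primeCompl A).mp hs
    have hay : a * y = 0 := by
      have := (Submodule.mem_annihilator_span_singleton y a).mp (hann ▸ ha)
      simpa [smul_eq_mul] using this
    have h2 : (s * algebraMap R A y) * algebraMap R A t = 0 := by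
      calc (s * algebraMap R A y) * algebraMap R A t
          = (s * algebraMap R A t) * algebraMap R A y := by ring
        _ = algebraMap R A a * algebraMap R A y := by rw [hat]
        _ = algebraMap R A (a * y) := by rw [map_mul]
        _ = 0 := by rw [hay, map_zero]
    exact (IsUnit.mul_left_eq_zero (IsLocalization.map_units A ⟨t, ht⟩)).mp h2
  refine le_antisymm (sSup_le ?_) zero_le
  rintro n ⟨rs, hmem, hreg, hlen⟩
  cases rs with
  | nil => rw [← hlen]; simp
  | cons r l =>
    exfalso
    have h1 := ((RingTheory.Sequence.isWeaklyRegular_cons_iff A r l).mp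
      hreg.toIsWeaklyRegular).1
    have hr := hkill r (hmem r List.mem_cons_self)
    refine hy1 (h1 ?_)
    show r • (algebraMap R A y) = r • (0 : A)
    rw [smul_eq_mul, hr, smul_zero]

/-- Over a noetherian ring satisfying `(S₁)`, every prime of height at least one contains a
non-zero-divisor. -/
lemma aux_exists_nzd [IsNoetherianRing R] (hR : SerreS1 R)
    {p : Ideal R} (hp : p.IsPrime)
    (hht : 1 ≤ Order.height (⟨p, hp⟩ : PrimeSpectrum R)) :
    ∃ x ∈ p, ∀ y : R, x * y = 0 → y = 0 := by
  classical
  by_contra hcon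
  push_neg at hcon
  have hass : ∀ q ∈ associatedPrimes R R, q ∈ minimalPrimes R := by
    intro q hqm
    have hq : q.IsPrime := hqm.isPrime
    obtain ⟨_, y, hy⟩ := isAssociatedPrime_iff.mp hqm
    replace hy : q = (Submodule.span R {y}).annihilator := by
      rw [hy]; ext r; simp [Submodule.mem_colon_singleton, Submodule.mem_annihilator_span_singleton]
    have hy0 : y ≠ 0 := by
      rintro rfl
      apply hq.ne_top
      rw [hy, Submodule.span_singleton_eq_bot.mpr rfl, Submodule.annihilator_bot]
    have hd := aux_depth_zero hq y hy0 hy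
    have h0 : Order.height (⟨q, hq⟩ : PrimeSpectrum R) = 0 := by
      by_contra hne
      have h1 : 1 ≤ Order.height (⟨q, hq⟩ : PrimeSpectrum R) :=
        ENat.one_le_iff_ne_zero.mpr hne
      have h2 := hR q hq
      rw [hd, min_eq_right h1] at h2
      simp at h2
    have hmin : IsMin (⟨q, hq⟩ : PrimeSpectrum R) := Order.height_eq_zero.mp h0
    exact ⟨⟨hq, bot_le⟩, fun q' hq' hle =>
      hmin (show (⟨q', hq'.1⟩ : PrimeSpectrum R) ≤ ⟨q, hq⟩ from hle)⟩
  have hfin := minimalPrimes.finite_of_isNoetherianRing R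
  have hcov : (p : Set R) ⊆ ⋃ i ∈ (↑hfin.toFinset : Set (Ideal R)), ((id i : Ideal R) : Set R) := by
    intro x hx
    obtain ⟨y, hxy, hy0⟩ := hcon x hx
    have hzd : x ∈ {r : R | ∃ z : R, z ≠ 0 ∧ r • z = 0} :=
      ⟨y, hy0, by rw [smul_eq_mul]; exact hxy⟩
    rw [← biUnion_associatedPrimes_eq_zero_divisors R R] at hzd
    obtain ⟨q, hq1, hq2⟩ := Set.mem_iUnion₂.mp hzd
    exact Set.mem_biUnion (Finset.mem_coe.mpr (hfin.mem_toFinset.mpr (hass q hq1))) hq2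
  have hprime : ∀ i ∈ hfin.toFinset, i ≠ (⊤ : Ideal R) → i ≠ ⊤ → (id i : Ideal R).IsPrime :=
    fun i hi _ _ => (hfin.mem_toFinset.mp hi).1.1
  obtain ⟨q, hqs, hpq⟩ :=
    (Ideal.subset_union_prime (s := hfin.toFinset) (f := id) ⊤ ⊤ hprime).mp hcov
  have hqmin := hfin.mem_toFinset.mp hqs
  have hq : q.IsPrime := hqmin.1.1
  have h0 : Order.height (⟨q, hq⟩ : PrimeSpectrum R) = 0 :=
    Order.height_eq_zero.mpr (fun y hy =>
      show (⟨q, hq⟩ : PrimeSpectrum R) ≤ y from hqmin.2 ⟨y.isPrime, bot_le⟩ hy)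
  have hle := hht.trans (Order.height_mono
    (show (⟨p, hp⟩ : PrimeSpectrum R) ≤ ⟨q, hq⟩ from hpq))
  rw [h0] at hle
  simp at hle

end Aux

/-- Over an `(S₁)` noetherian ring, if `D` is finitely generated, `ht p ≥ 1`
and `E` is the injective hull of `R/p`, then `Hom_R(D, E) ⊗_R G = 0` for every Gorenstein
injective module `G`. -/
theorem statement5 (R : Type u) [CommRing R] [IsNoetherianRing R] (hR : SerreS1 R)
    (D : Type u) [AddCommGroup D] [Module R D] [Module.Finite R D]
    (p : Ideal R) (hp : p.IsPrime)
    (hht : 1 ≤ Order.height (⟨p, hp⟩ : PrimeSpectrum R))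
    (E : Type u) [AddCommGroup E] [Module R E] (hE : IsInjectiveHull R (R ⧸ p) E)
    (G : Type u) [AddCommGroup G] [Module R G] (hG : GorensteinInjective R G) :
    Subsingleton (TensorProduct R (D →ₗ[R] E) G) := by
  classical
  obtain ⟨hEinj, ι, hι, hess⟩ := hE
  obtain ⟨x, hxp, hx⟩ := aux_exists_nzd hR hp hht
  obtain ⟨X, ⟨eq⟩⟩ := hG
  -- `G` is divisible by `x`
  have hdiv1 : ∀ g : G, ∃ g', x • g' = g := by
    intro g
    obtain ⟨w, hw⟩ := (eq g).2
    obtain ⟨w', hw'⟩ := aux_div_of_injective (X.inj 0) hx w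
    refine ⟨eq.symm ⟨X.d 0 w', ⟨w', rfl⟩⟩, ?_⟩
    have hsm : x • (⟨X.d 0 w', ⟨w', rfl⟩⟩ : LinearMap.range (X.d 0)) = eq g := by
      apply Subtype.ext
      simp only [SetLike.val_smul]
      rw [← map_smul, hw', hw]
    rw [← map_smul, hsm, LinearEquiv.symm_apply_apply]
  -- `G` is divisible by powers of `x`
  have hdiv : ∀ (m : ℕ) (g : G), ∃ g', x ^ m • g' = g := by
    intro m
    induction m with
    | zero => exact fun g => ⟨g, by simp⟩
    | succ k ih =>
      intro g
      obtain ⟨g1, hg1⟩ := hdiv1 g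
      obtain ⟨g2, hg2⟩ := ih g1
      exact ⟨g2, by rw [pow_succ', mul_smul, hg2, hg1]⟩
  -- every element of `Hom_R(D, E)` is annihilated by a power of `x`
  have htorE : ∀ e : E, ∃ m : ℕ, x ^ m • e = 0 := fun e => aux_tors ι hess hxp e
  have htor : ∀ f : D →ₗ[R] E, ∃ m : ℕ, x ^ m • f = 0 := by
    intro f
    obtain ⟨s, hs⟩ := Module.Finite.fg_top (R := R) (M := D)
    choose mf hmf using fun d : D => htorE (f d)
    set m := s.sup mf with hm
    have hgen : ∀ d ∈ s, x ^ m • f d = 0 := by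
      intro d hd
      have hle : mf d ≤ m := Finset.le_sup hd
      have hsplit : x ^ m = x ^ (m - mf d) * x ^ (mf d) := by
        rw [← pow_add]; congr 1; omega
      rw [hsplit, mul_smul, hmf d, smul_zero]
    refine ⟨m, ?_⟩
    have hker : (⊤ : Submodule R D) ≤ LinearMap.ker (x ^ m • f) := by
      rw [← hs]
      apply Submodule.span_le.mpr
      intro d hd
      simp only [SetLike.mem_coe, LinearMap.mem_ker, LinearMap.smul_apply]
      exact hgen d hd
    exact LinearMap.ext fun d => by
      simpa using LinearMap.mem_ker.mp (hker Submodule.mem_top)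
  -- conclude
  refine subsingleton_of_forall_eq 0 (fun z => ?_)
  induction z using TensorProduct.induction_on with
  | zero => rfl
  | tmul t g =>
    obtain ⟨m, htm⟩ := htor t
    obtain ⟨g', rfl⟩ := hdiv m g
    rw [← TensorProduct.smul_tmul, htm, TensorProduct.zero_tmul]
  | add a b ha hb => rw [ha, hb, add_zero]
end
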